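/- (Case 1.1 of the social-cost analysis.) Consider a facility-location instance with |N₁| ≥ |N₂| and |N₁ \ N₂| ≥ |N₁ ∩ N₂|, let m₁ be the median position of N₁ \ N₂ and m₂ the median position of N₂, and suppose t(m₂) ≠ t(m₁). Then the solution w = (t(m₁), t(m₂)) satisfies SC(w) ≤ 7 · SC(y₁,y₂) for every feasible solution (y₁,y₂). -/

import Mathlib

open Finset

/-- The smallest element of `C` minimizing the distance to `p`. -/
noncomputable def tloc (C : Finset ℝ) (p : ℝ) : ℝ :=
  WithTop.untopD 0 (C.filter fun c => ∀ c' ∈ C, |p - c| ≤ |p - c'|).min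

/-- The smallest element of `C \ {tloc C p}` minimizing the distance to `p`. -/
noncomputable def sloc (C : Finset ℝ) (p : ℝ) : ℝ :=
  tloc (C.erase (tloc C p)) p

/-- The `⌈n/2⌉`-th smallest element of a multiset of reals (0 if empty). -/
noncomputable def medOf (l : Multiset ℝ) : ℝ :=
  (l.sort (· ≤ ·)).getD ((Multiset.card l + 1) / 2 - 1) 0

/-- The median position of the agents in `S` with positions `x`. -/
noncomputable def medianPos (S : Finset ℕ) (x : ℕ → ℝ) : ℝ :=
  medOf (S.val.map x)

/-- The Conditional-Median mechanism, assuming facility 1 is (weakly) more popular. -/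
noncomputable def condMedian (x : ℕ → ℝ) (N1 N2 : Finset ℕ) (C : Finset ℝ) : ℝ × ℝ :=
  if (N1 ∩ N2).card ≤ (N1 \ N2).card then
    let m1 := medianPos (N1 \ N2) x
    let m2 := medianPos N2 x
    let w1 := tloc C m1
    (w1, if tloc C m2 ≠ w1 then tloc C m2 else sloc C m2)
  else
    let m12 := medianPos (N1 ∩ N2) x
    (tloc C m12, sloc C m12)

/-- The output of the Conditional-Median mechanism (roles swapped if `|N₂| > |N₁|`). -/
noncomputable def mechOutput (x : ℕ → ℝ) (N1 N2 : Finset ℕ) (C : Finset ℝ) : ℝ × ℝ :=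
  if N2.card ≤ N1.card then condMedian x N1 N2 C
  else (condMedian x N2 N1 C).swap

/-- The cost of agent `i` at solution `y`: the distance to the farthest approved facility. -/
noncomputable def cost (x : ℕ → ℝ) (N1 N2 : Finset ℕ) (i : ℕ) (y : ℝ × ℝ) : ℝ :=
  if i ∈ N1 then
    if i ∈ N2 then max |x i - y.1| |x i - y.2| else |x i - y.1|
  else |x i - y.2|

/-- The social cost. -/
noncomputable def SC (x : ℕ → ℝ) (N1 N2 N : Finset ℕ) (y : ℝ × ℝ) : ℝ :=
  ∑ i ∈ N, cost x N1 N2 i y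

/-- The max cost. -/
noncomputable def MC (x : ℕ → ℝ) (N1 N2 N : Finset ℕ) (hN : N.Nonempty) (y : ℝ × ℝ) : ℝ :=
  N.sup' hN fun i => cost x N1 N2 i y

lemma tloc_spec (C : Finset ℝ) (hC : C.Nonempty) (p : ℝ) :
    tloc C p ∈ C ∧ ∀ c ∈ C, |p - tloc C p| ≤ |p - c| := by
  obtain ⟨c₀, hc₀, hmin⟩ := C.exists_min_image (fun c => |p - c|) hC
  have hF : (C.filter fun c => ∀ c' ∈ C, |p - c| ≤ |p - c'|).Nonempty :=
    ⟨c₀, by simp only [mem_filter]; exact ⟨hc₀, hmin⟩⟩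
  have ht : tloc C p ∈ C.filter fun c => ∀ c' ∈ C, |p - c| ≤ |p - c'| := by
    rw [tloc, ← Finset.coe_min' hF, WithTop.untopD_coe]
    exact Finset.min'_mem _ _
  rw [Finset.mem_filter] at ht
  exact ht

lemma sorted_getD_mono (L : List ℝ) (hL : L.Pairwise (· ≤ ·)) {i j : ℕ}
    (hij : i ≤ j) (hj : j < L.length) : L.getD i 0 ≤ L.getD j 0 := by
  have hi : i < L.length := lt_of_le_of_lt hij hj
  rw [L.getD_eq_getElem 0 hi, L.getD_eq_getElem 0 hj]
  have := hL.rel_get_of_le (a := ⟨i, hi⟩) (b := ⟨j, hj⟩) hij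
  simpa using this

lemma list_sum_eq (L : List ℝ) (f : ℝ → ℝ) :
    (L.map f).sum = ∑ j ∈ Finset.range L.length, f (L.getD j 0) := by
  conv_lhs => rw [← List.ofFn_get L, List.map_ofFn, List.sum_ofFn]
  rw [← Fin.sum_univ_eq_sum_range]
  refine Finset.sum_congr rfl fun i _ => ?_
  rw [Function.comp_apply, List.getD_eq_getElem _ 0 i.isLt]
  rfl

lemma finset_sum_eq (S : Finset ℕ) (x : ℕ → ℝ) (f : ℝ → ℝ) :
    ∑ i ∈ S, f (x i) =
      ∑ j ∈ Finset.range ((S.val.map x).sort (· ≤ ·)).length, f (((S.val.map x).sort (· ≤ ·)).getD j 0) := by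
  have h1 : ∑ i ∈ S, f (x i) = ((S.val.map x).map f).sum := by
    rw [Multiset.map_map]; rfl
  have h2 : (S.val.map x) = (((S.val.map x).sort (· ≤ ·) : List ℝ) : Multiset ℝ) :=
    (Multiset.sort_eq _ _).symm
  conv_lhs => rw [h1, h2, Multiset.map_coe, Multiset.sum_coe]
  rw [list_sum_eq]

lemma pair_helper (a b m c : ℝ) (h1 : a ≤ m) (h2 : m ≤ b) :
    |a - m| + |b - m| ≤ |a - c| + |b - c| ∧ |m - c| ≤ |a - c| + |b - c| := by
  have ha1 : a - c ≤ |a - c| := le_abs_self _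
  have ha2 : c - a ≤ |a - c| := by rw [abs_sub_comm]; exact le_abs_self _
  have hb1 : b - c ≤ |b - c| := le_abs_self _
  have hb2 : c - b ≤ |b - c| := by rw [abs_sub_comm]; exact le_abs_self _
  have e1 : |a - m| = m - a := by rw [abs_sub_comm]; exact abs_of_nonneg (by linarith)
  have e2 : |b - m| = b - m := abs_of_nonneg (by linarith)
  refine ⟨by rw [e1, e2]; linarith, ?_⟩
  rw [abs_sub_le_iff]
  constructor <;> linarith

lemma median_spec (S : Finset ℕ) (hS : S.Nonempty) (x : ℕ → ℝ) (c : ℝ) :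
    (∑ i ∈ S, |x i - medianPos S x| ≤ ∑ i ∈ S, |x i - c|) ∧
    (S.card : ℝ) * |medianPos S x - c| ≤ 2 * ∑ i ∈ S, |x i - c| := by
  set L := (S.val.map x).sort (· ≤ ·) with hLdef
  have hsort : L.Pairwise (· ≤ ·) := Multiset.pairwise_sort _ _
  set n := L.length with hn
  have hcard : S.card = n := by
    rw [hn, hLdef, Multiset.length_sort, Multiset.card_map]; rfl
  have hn1 : 1 ≤ n := hcard ▸ Finset.card_pos.mpr hS
  set k := (n - 1) / 2 with hk
  have hkn : k < n := by omega
  set m := L.getD k 0 with hmdef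
  have hm : medianPos S x = m := by
    have hc2 : Multiset.card (S.val.map x) = n := by
      rw [Multiset.card_map]; exact hcard
    rw [medianPos, medOf, hc2, ← hLdef]
    congr 1
    omega
  have key : ∀ j ∈ Finset.range n,
      (|L.getD j 0 - m| + |L.getD (n-1-j) 0 - m| ≤ |L.getD j 0 - c| + |L.getD (n-1-j) 0 - c|) ∧
      |m - c| ≤ |L.getD j 0 - c| + |L.getD (n-1-j) 0 - c| := by
    intro j hj
    rw [Finset.mem_range] at hj
    by_cases hjk : j ≤ k
    · have h1 : L.getD j 0 ≤ m := sorted_getD_mono L hsort hjk hkn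
      have h2 : m ≤ L.getD (n-1-j) 0 := sorted_getD_mono L hsort (by omega) (by omega)
      exact pair_helper _ _ _ c h1 h2
    · have h1 : L.getD (n-1-j) 0 ≤ m := sorted_getD_mono L hsort (by omega) hkn
      have h2 : m ≤ L.getD j 0 := sorted_getD_mono L hsort (by omega) hj
      obtain ⟨p1, p2⟩ := pair_helper _ _ _ c h1 h2
      exact ⟨by linarith, by linarith⟩
  have hrefm : ∑ j ∈ Finset.range n, |L.getD (n-1-j) 0 - m| = ∑ j ∈ Finset.range n, |L.getD j 0 - m| :=
    Finset.sum_range_reflect (fun j => |L.getD j 0 - m|) n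
  have hrefc : ∑ j ∈ Finset.range n, |L.getD (n-1-j) 0 - c| = ∑ j ∈ Finset.range n, |L.getD j 0 - c| :=
    Finset.sum_range_reflect (fun j => |L.getD j 0 - c|) n
  have eqm : ∑ i ∈ S, |x i - medianPos S x| = ∑ j ∈ Finset.range n, |L.getD j 0 - m| := by
    rw [hm]; exact finset_sum_eq S x (fun a => |a - m|)
  have eqc : ∑ i ∈ S, |x i - c| = ∑ j ∈ Finset.range n, |L.getD j 0 - c| := by
    exact finset_sum_eq S x (fun a => |a - c|)
  constructor
  · have h := Finset.sum_le_sum (fun j hj => (key j hj).1)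
    rw [Finset.sum_add_distrib, Finset.sum_add_distrib, hrefm, hrefc] at h
    rw [eqm, eqc]; linarith
  · have h := Finset.sum_le_sum (fun j hj => (key j hj).2)
    rw [Finset.sum_add_distrib, hrefc, Finset.sum_const, Finset.card_range, nsmul_eq_mul] at h
    rw [hm, eqc, hcard]
    linarith

/-- Case 1.1 of the social-cost analysis: when `|N₁| ≥ |N₂|`, `|N₁ \ N₂| ≥ |N₁ ∩ N₂|`
and `t(m₂) ≠ t(m₁)`, the solution `(t(m₁), t(m₂))` is 7-approximate for the social cost. -/
theorem case_one_one_seven_approx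
    (N N1 N2 : Finset ℕ) (x : ℕ → ℝ) (C : Finset ℝ)
    (hN : N.Nonempty) (h1 : N1.Nonempty) (h2 : N2.Nonempty)
    (hU : N1 ∪ N2 = N) (hC : 2 ≤ C.card)
    (hcards : N2.card ≤ N1.card)
    (hcase : (N1 ∩ N2).card ≤ (N1 \ N2).card)
    (hne : tloc C (medianPos N2 x) ≠ tloc C (medianPos (N1 \ N2) x))
    (y1 y2 : ℝ) (hy1 : y1 ∈ C) (hy2 : y2 ∈ C) (hy : y1 ≠ y2) :
    SC x N1 N2 N (tloc C (medianPos (N1 \ N2) x), tloc C (medianPos N2 x)) ≤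
      7 * SC x N1 N2 N (y1, y2) := by
  have hCne : C.Nonempty := Finset.card_pos.mp (by omega)
  -- A := N1 \ N2 is nonempty
  have hA : (N1 \ N2).Nonempty := by
    rw [Finset.nonempty_iff_ne_empty]
    intro h
    rw [h, Finset.card_empty, Nat.le_zero, Finset.card_eq_zero] at hcase
    obtain ⟨i, hi⟩ := h1
    have hsd := Finset.sdiff_union_inter N1 N2
    rw [h, hcase, Finset.empty_union] at hsd
    rw [← hsd] at hi
    exact absurd hi (Finset.notMem_empty i)
  set m1 := medianPos (N1 \ N2) x with hm1
  set m2 := medianPos N2 x with hm2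
  set w1 := tloc C m1 with hw1def
  set w2 := tloc C m2 with hw2def
  obtain ⟨hw1C, hw1⟩ := tloc_spec C hCne m1
  obtain ⟨hw2C, hw2⟩ := tloc_spec C hCne m2
  obtain ⟨M1A, M2A⟩ := median_spec (N1 \ N2) hA x y1
  obtain ⟨M1B, M2B⟩ := median_spec N2 h2 x y2
  -- notation for sums
  set sAw := ∑ i ∈ N1 \ N2, |x i - w1| with hsAw
  set sAy := ∑ i ∈ N1 \ N2, |x i - y1| with hsAy
  set sAm := ∑ i ∈ N1 \ N2, |x i - m1| with hsAm
  set sBw := ∑ i ∈ N2, |x i - w2| with hsBw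
  set sBy := ∑ i ∈ N2, |x i - y2| with hsBy
  set sBm := ∑ i ∈ N2, |x i - m2| with hsBm
  set sIw := ∑ i ∈ N1 ∩ N2, |x i - w1| with hsIw
  set sIy := ∑ i ∈ N1 ∩ N2, |x i - y1| with hsIy
  -- splitting N and N2
  have hN' : N = (N1 \ N2) ∪ N2 := by rw [← hU, Finset.sdiff_union_self_eq_union]
  have hdisj : Disjoint (N1 \ N2) N2 := Finset.sdiff_disjoint
  have hN2' : N2 = (N2 \ N1) ∪ (N1 ∩ N2) := by
    rw [Finset.inter_comm]; exact (Finset.sdiff_union_inter N2 N1).symm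
  have hdisj2 : Disjoint (N2 \ N1) (N1 ∩ N2) :=
    Finset.sdiff_disjoint.mono_right Finset.inter_subset_left
  have split2 : ∀ f : ℕ → ℝ, ∑ i ∈ N2, f i = (∑ i ∈ N2 \ N1, f i) + ∑ i ∈ N1 ∩ N2, f i := by
    intro f
    conv_lhs => rw [hN2']
    exact Finset.sum_union hdisj2
  have costA : ∀ y : ℝ × ℝ, ∀ i ∈ N1 \ N2, cost x N1 N2 i y = |x i - y.1| := by
    intro y i hi
    rw [Finset.mem_sdiff] at hi
    simp [cost, hi.1, hi.2]
  have costB : ∀ y : ℝ × ℝ, ∀ i ∈ N2 \ N1, cost x N1 N2 i y = |x i - y.2| := by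
    intro y i hi
    rw [Finset.mem_sdiff] at hi
    simp [cost, hi.2]
  have costI : ∀ y : ℝ × ℝ, ∀ i ∈ N1 ∩ N2, cost x N1 N2 i y = max |x i - y.1| |x i - y.2| := by
    intro y i hi
    rw [Finset.mem_inter] at hi
    simp [cost, hi.1, hi.2]
  have SCsplit : ∀ y : ℝ × ℝ, SC x N1 N2 N y =
      (∑ i ∈ N1 \ N2, |x i - y.1|) + ((∑ i ∈ N2 \ N1, |x i - y.2|) +
        ∑ i ∈ N1 ∩ N2, max |x i - y.1| |x i - y.2|) := by
    intro y
    rw [SC, hN', Finset.sum_union hdisj]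
    congr 1
    · exact Finset.sum_congr rfl (costA y)
    · rw [split2 (fun i => cost x N1 N2 i y)]
      rw [Finset.sum_congr rfl (costB y), Finset.sum_congr rfl (costI y)]
  -- upper bound on SC at w
  have UBw : SC x N1 N2 N (w1, w2) ≤ sAw + (sBw + sIw) := by
    rw [SCsplit]
    have hmax : ∑ i ∈ N1 ∩ N2, max |x i - (w1, w2).1| |x i - (w1, w2).2| ≤
        (∑ i ∈ N1 ∩ N2, |x i - w2|) + sIw := by
      rw [hsIw, ← Finset.sum_add_distrib]
      refine Finset.sum_le_sum fun i _ => ?_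
      exact max_le (le_add_of_nonneg_left (abs_nonneg _)) (le_add_of_nonneg_right (abs_nonneg _))
    have hBsplit : sBw = (∑ i ∈ N2 \ N1, |x i - w2|) + ∑ i ∈ N1 ∩ N2, |x i - w2| :=
      split2 (fun i => |x i - w2|)
    simp only []
    linarith [hmax, hBsplit.le, hBsplit.ge]
  -- lower bounds on SC at y
  have SCy : SC x N1 N2 N (y1, y2) = sAy + ((∑ i ∈ N2 \ N1, |x i - y2|) +
      ∑ i ∈ N1 ∩ N2, max |x i - y1| |x i - y2|) := SCsplit (y1, y2)
  have LB1 : sBy ≤ (∑ i ∈ N2 \ N1, |x i - y2|) + ∑ i ∈ N1 ∩ N2, max |x i - y1| |x i - y2| := by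
    have : sBy = (∑ i ∈ N2 \ N1, |x i - y2|) + ∑ i ∈ N1 ∩ N2, |x i - y2| :=
      split2 (fun i => |x i - y2|)
    rw [this]
    exact add_le_add_right (Finset.sum_le_sum fun i _ => le_max_right _ _) _
  have LB2 : sIy ≤ (∑ i ∈ N2 \ N1, |x i - y2|) + ∑ i ∈ N1 ∩ N2, max |x i - y1| |x i - y2| := by
    have h1' : sIy ≤ ∑ i ∈ N1 ∩ N2, max |x i - y1| |x i - y2| :=
      Finset.sum_le_sum fun i _ => le_max_left _ _
    have h2' : (0:ℝ) ≤ ∑ i ∈ N2 \ N1, |x i - y2| :=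
      Finset.sum_nonneg fun i _ => abs_nonneg _
    linarith
  have T2nn : (0:ℝ) ≤ (∑ i ∈ N2 \ N1, |x i - y2|) + ∑ i ∈ N1 ∩ N2, max |x i - y1| |x i - y2| := by
    have := Finset.sum_nonneg (s := N2 \ N1) fun i (_ : i ∈ N2 \ N1) => abs_nonneg (x i - y2)
    have h2' := Finset.sum_nonneg (s := N1 ∩ N2)
      fun i (_ : i ∈ N1 ∩ N2) => le_trans (abs_nonneg (x i - y1)) (le_max_left _ |x i - y2|)
    linarith
  -- F1 : sAw ≤ sAm + |A| * |m1 - y1|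
  have F1 : sAw ≤ sAm + ((N1 \ N2).card : ℝ) * |m1 - y1| := by
    have hterm : ∀ i ∈ N1 \ N2, |x i - w1| ≤ |x i - m1| + |m1 - y1| := by
      intro i _
      calc |x i - w1| ≤ |x i - m1| + |m1 - w1| := abs_sub_le _ _ _
        _ ≤ |x i - m1| + |m1 - y1| := by linarith [hw1 y1 hy1]
    calc sAw ≤ ∑ i ∈ N1 \ N2, (|x i - m1| + |m1 - y1|) := Finset.sum_le_sum hterm
      _ = sAm + ((N1 \ N2).card : ℝ) * |m1 - y1| := by
        rw [Finset.sum_add_distrib, Finset.sum_const, nsmul_eq_mul, hsAm]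
  have F2 : sBw ≤ sBm + (N2.card : ℝ) * |m2 - y2| := by
    have hterm : ∀ i ∈ N2, |x i - w2| ≤ |x i - m2| + |m2 - y2| := by
      intro i _
      calc |x i - w2| ≤ |x i - m2| + |m2 - w2| := abs_sub_le _ _ _
        _ ≤ |x i - m2| + |m2 - y2| := by linarith [hw2 y2 hy2]
    calc sBw ≤ ∑ i ∈ N2, (|x i - m2| + |m2 - y2|) := Finset.sum_le_sum hterm
      _ = sBm + (N2.card : ℝ) * |m2 - y2| := by
        rw [Finset.sum_add_distrib, Finset.sum_const, nsmul_eq_mul, hsBm]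
  -- F3 : sIw ≤ sIy + |I| * |y1 - w1|
  have F3 : sIw ≤ sIy + ((N1 ∩ N2).card : ℝ) * |y1 - w1| := by
    have hterm : ∀ i ∈ N1 ∩ N2, |x i - w1| ≤ |x i - y1| + |y1 - w1| :=
      fun i _ => abs_sub_le _ _ _
    calc sIw ≤ ∑ i ∈ N1 ∩ N2, (|x i - y1| + |y1 - w1|) := Finset.sum_le_sum hterm
      _ = sIy + ((N1 ∩ N2).card : ℝ) * |y1 - w1| := by
        rw [Finset.sum_add_distrib, Finset.sum_const, nsmul_eq_mul, hsIy]
  have F5 : |y1 - w1| ≤ 2 * |m1 - y1| := by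
    have := hw1 y1 hy1
    calc |y1 - w1| ≤ |y1 - m1| + |m1 - w1| := abs_sub_le _ _ _
      _ ≤ 2 * |m1 - y1| := by rw [abs_sub_comm y1 m1]; linarith
  have F4 : ((N1 ∩ N2).card : ℝ) * |y1 - w1| ≤ 4 * sAy := by
    have hc : ((N1 ∩ N2).card : ℝ) ≤ ((N1 \ N2).card : ℝ) := Nat.cast_le.mpr hcase
    have h1' : ((N1 ∩ N2).card : ℝ) * |y1 - w1| ≤ ((N1 \ N2).card : ℝ) * |y1 - w1| :=
      mul_le_mul_of_nonneg_right hc (abs_nonneg _)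
    have h2' : ((N1 \ N2).card : ℝ) * |y1 - w1| ≤ ((N1 \ N2).card : ℝ) * (2 * |m1 - y1|) :=
      mul_le_mul_of_nonneg_left F5 (Nat.cast_nonneg _)
    nlinarith [M2A]
  -- conclude
  rw [SCy]
  linarith [M1A, M1B, M2B, F1, F2, F3, F4, LB1, LB2, T2nn, UBw]
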